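/- Let T be a binary tree with exactly n+1 leaves, where n ≥ 1, let r be a leaf of T, and let a be a real number with 1 < a ≤ 2n. Then T has an edge e such that the number of leaves of T lying in the connected component, of the graph obtained from T by deleting the edge e, that does not contain r is at least a/2 and strictly less than a. -/

import Mathlib

open SimpleGraph

/-- A binary tree: a finite tree on at least two vertices in which every
vertex has degree 1 or 3. -/
structure BinTree (V : Type) : Type where
  graph : SimpleGraph V
  finiteV : Finite V
  two_le_card : 2 ≤ Nat.card V
  isTree : graph.IsTree
  deg : ∀ v : V, (graph.neighborSet v).ncard = 1 ∨ (graph.neighborSet v).ncard = 3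

/-- A vertex is a leaf when it has degree 1. -/
def BinTree.IsLeaf {V : Type} (T : BinTree V) (v : V) : Prop :=
  (T.graph.neighborSet v).ncard = 1

/-- A binary leaf-labelled tree on the label set `X`. -/
structure LTree (V X : Type) extends BinTree V where
  label : X ≃ {v : V // toBinTree.IsLeaf v}

/-- The graph resulting from an SPR move taking `xy` from `ab` to `cd`:
delete the edges `ax`, `xb`, `cd` and add the edges `ab`, `cx`, `xd`. -/
def sprGraph {V : Type} (G : SimpleGraph V) (x a b c d : V) : SimpleGraph V :=
  SimpleGraph.fromEdgeSet ((G.edgeSet \ {s(a,x), s(x,b), s(c,d)}) ∪ {s(a,b), s(c,x), s(x,d)})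

/-- `B` is obtained from `A` by the SPR move taking `xy` from `ab` to `cd`. -/
def IsSPRMoveAt {V X : Type} (A B : LTree V X) (x y a b c d : V) : Prop :=
  s(x,y) ∈ A.graph.edgeSet ∧ s(a,x) ∈ A.graph.edgeSet ∧ s(x,b) ∈ A.graph.edgeSet ∧
    s(c,d) ∈ A.graph.edgeSet ∧
    ([s(x,y), s(a,x), s(x,b), s(c,d)] : List (Sym2 V)).Nodup ∧
    (∀ p : A.graph.Walk c y, x ∈ p.support) ∧
    B.graph = sprGraph A.graph x a b c d ∧
    ∀ z : X, ((B.label z : V) = (A.label z : V))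

/-- `B` is obtained from `A` by the rSPR move (relative to the root label `r`)
taking `xy` from `ab` to `cd`. -/
def IsRSPRMoveAt {V X : Type} (r : X) (A B : LTree V X) (x y a b c d : V) : Prop :=
  IsSPRMoveAt A B x y a b c d ∧ ∀ p : A.graph.Walk (A.label r : V) y, x ∈ p.support

/-- `B` is obtained from `A` by a single SPR move. -/
def IsSPRMove {V X : Type} (A B : LTree V X) : Prop :=
  ∃ x y a b c d : V, IsSPRMoveAt A B x y a b c d

/-- `B` is obtained from `A` by a single rSPR move. -/
def IsRSPRMove {V X : Type} (r : X) (A B : LTree V X) : Prop :=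
  ∃ x y a b c d : V, IsRSPRMoveAt r A B x y a b c d

/-- Label-preserving isomorphism of binary leaf-labelled trees. -/
def LTreeIso {V W X : Type} (A : LTree V X) (B : LTree W X) : Prop :=
  ∃ e : A.graph ≃g B.graph, ∀ z : X, e (A.label z : V) = (B.label z : W)

/-- The SPR distance between two binary leaf-labelled trees on `X`. -/
noncomputable def dSPR {V W X : Type} (A : LTree V X) (B : LTree W X) : ℕ :=
  sInf {d : ℕ | ∃ f : ℕ → LTree V X, f 0 = A ∧
    (∀ i < d, IsSPRMove (f i) (f (i+1))) ∧ LTreeIso (f d) B}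

/-- The rSPR distance (relative to root label `r`) between two binary
leaf-labelled trees on `X`. -/
noncomputable def dRSPR {V W X : Type} (r : X) (A : LTree V X) (B : LTree W X) : ℕ :=
  sInf {d : ℕ | ∃ f : ℕ → LTree V X, f 0 = A ∧
    (∀ i < d, IsRSPRMove r (f i) (f (i+1))) ∧ LTreeIso (f d) B}


section Aux
variable {V : Type} {G : SimpleGraph V}

private lemma del_adj {e : Sym2 V} {x y : V} (h : G.Adj x y) (hne : s(x,y) ≠ e) :
    (G.deleteEdges {e}).Adj x y := by
  rw [SimpleGraph.deleteEdges_adj]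
  exact ⟨h, by simpa using hne⟩

private lemma bridge_not_reach (hG : G.IsAcyclic) {u v : V} (h : G.Adj u v) :
    ¬ (G.deleteEdges {s(u,v)}).Reachable u v :=
  isAcyclic_iff_forall_adj_isBridge.mp hG h

private lemma reach_of_del_walk {e f : Sym2 V} {x z : V} (p : (G.deleteEdges {e}).Walk x z)
    (hf : f ∉ p.edges) : (G.deleteEdges {f}).Reachable x z := by
  refine ⟨p.transfer _ fun e' he' => ?_⟩
  have h1 := p.edges_subset_edgeSet he'
  rw [edgeSet_deleteEdges] at h1
  rw [edgeSet_deleteEdges]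
  exact ⟨h1.1, fun hh => hf ((Set.mem_singleton_iff.mp hh) ▸ he')⟩

private lemma exists_walk_avoid {e : Sym2 V} {x z v : V}
    (hxz : (G.deleteEdges {e}).Reachable x z) (hxv : ¬ (G.deleteEdges {e}).Reachable x v) :
    ∃ p : (G.deleteEdges {e}).Walk x z, v ∉ p.support := by
  classical
  obtain ⟨p⟩ := hxz
  exact ⟨p, fun hv => hxv ⟨p.takeUntil v hv⟩⟩

private lemma reach_avoid {e : Sym2 V} {v w x z : V}
    (hxz : (G.deleteEdges {e}).Reachable x z) (hxv : ¬ (G.deleteEdges {e}).Reachable x v) :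
    (G.deleteEdges {s(v,w)}).Reachable x z := by
  obtain ⟨p, hp⟩ := exists_walk_avoid hxz hxv
  exact reach_of_del_walk p (fun he => hp (p.fst_mem_support_of_mem_edges he))

private lemma two_sided (hc : G.Preconnected) {u v : V} (h : G.Adj u v) (z : V) :
    (G.deleteEdges {s(u,v)}).Reachable u z ∨ (G.deleteEdges {s(u,v)}).Reachable v z := by
  classical
  obtain ⟨p0⟩ := hc u z
  have hex : ∃ p : G.Walk u z, p.IsPath := ⟨p0.bypass, p0.bypass_isPath⟩
  obtain ⟨p, hp⟩ := hex
  cases p with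
  | nil => exact Or.inl (Reachable.refl u)
  | cons hadj q =>
    rename_i x
    rw [Walk.cons_isPath_iff] at hp
    obtain ⟨hq, hus⟩ := hp
    by_cases hxv : x = v
    · subst hxv
      right
      refine ⟨q.toDeleteEdges {s(u,x)} fun e he hs => ?_⟩
      rw [Set.mem_singleton_iff] at hs; subst hs
      exact hus (q.fst_mem_support_of_mem_edges he)
    · left
      refine ⟨(Walk.cons hadj q).toDeleteEdges {s(u,v)} fun e he hs => ?_⟩
      rw [Set.mem_singleton_iff] at hs; subst hs
      rw [Walk.edges_cons] at he
      rcases List.mem_cons.mp he with h1 | h2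
      · rcases Sym2.eq_iff.mp h1 with ⟨-, hvx⟩ | ⟨-, hvu⟩
        · exact hxv hvx.symm
        · exact G.loopless.irrefl _ (hvu ▸ h)
      · exact hus (q.fst_mem_support_of_mem_edges h2)

private lemma step_off {e : Sym2 V} {v z : V}
    (hvz : (G.deleteEdges {e}).Reachable v z) (hne : v ≠ z) :
    ∃ x, (G.deleteEdges {e}).Adj v x ∧ (G.deleteEdges {s(v,x)}).Reachable x z := by
  classical
  obtain ⟨p0⟩ := hvz
  have hex : ∃ p : (G.deleteEdges {e}).Walk v z, p.IsPath := ⟨p0.bypass, p0.bypass_isPath⟩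
  obtain ⟨p, hp⟩ := hex
  cases p with
  | nil => exact absurd rfl hne
  | cons hadj q =>
    rename_i x
    rw [Walk.cons_isPath_iff] at hp
    exact ⟨x, hadj, reach_of_del_walk q fun he => hp.2 (q.fst_mem_support_of_mem_edges he)⟩

private lemma neighbor_three {q p : V} (h3 : (G.neighborSet q).ncard = 3) (hp : G.Adj q p) :
    ∃ y₁ y₂, y₁ ≠ y₂ ∧ y₁ ≠ p ∧ y₂ ≠ p ∧ G.neighborSet q = {p, y₁, y₂} := by
  obtain ⟨a, b, c, hab, hac, hbc, hset⟩ := Set.ncard_eq_three.mp h3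
  have hpm : p ∈ G.neighborSet q := hp
  rw [hset] at hpm
  simp only [Set.mem_insert_iff, Set.mem_singleton_iff] at hpm
  rcases hpm with rfl | rfl | rfl
  · exact ⟨b, c, hbc, hab.symm, hac.symm, hset⟩
  · refine ⟨a, c, hac, hab, hbc.symm, ?_⟩
    rw [hset]; ext w; simp; tauto
  · refine ⟨a, b, hab, hac, hbc, ?_⟩
    rw [hset]; ext w; simp; tauto

private lemma leaf_reach_eq {u v z : V} (hleaf : G.neighborSet v = {u})
    (h : (G.deleteEdges {s(u,v)}).Reachable v z) : z = v := by
  obtain ⟨p⟩ := h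
  cases p with
  | nil => rfl
  | cons hadj q =>
    rename_i x
    rw [SimpleGraph.deleteEdges_adj] at hadj
    have hx : x ∈ G.neighborSet v := hadj.1
    rw [hleaf, Set.mem_singleton_iff] at hx
    subst hx
    exact absurd (Set.mem_singleton_iff.mpr Sym2.eq_swap) hadj.2

private lemma reach_r_u (hG : G.IsTree) {u v r : V} (h : G.Adj u v)
    (hfar : ¬ (G.deleteEdges {s(u,v)}).Reachable r v) :
    (G.deleteEdges {s(u,v)}).Reachable r u := by
  rcases two_sided hG.isConnected.preconnected h r with h1 | h2
  · exact h1.symm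
  · exact absurd h2.symm hfar

private lemma far_char (hG : G.IsTree) {u v r : V} (h : G.Adj u v)
    (hfar : ¬ (G.deleteEdges {s(u,v)}).Reachable r v) (z : V) :
    ¬ (G.deleteEdges {s(u,v)}).Reachable r z ↔ (G.deleteEdges {s(u,v)}).Reachable v z := by
  constructor
  · intro hz
    rcases two_sided hG.isConnected.preconnected h z with h1 | h2
    · exact absurd ((reach_r_u hG h hfar).trans h1) hz
    · exact h2
  · intro hvz hrz
    exact hfar (hrz.trans hvz.symm)

private lemma exists_far_leaf [Finite V] (hG : G.IsTree)
    (hdeg : ∀ x : V, (G.neighborSet x).ncard = 1 ∨ (G.neighborSet x).ncard = 3) :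
    ∀ (n : ℕ) (p q : V), G.Adj p q →
      {z | (G.deleteEdges {s(p,q)}).Reachable q z}.ncard = n →
      ∃ z, (G.neighborSet z).ncard = 1 ∧ (G.deleteEdges {s(p,q)}).Reachable q z := by
  intro n
  induction n using Nat.strong_induction_on with
  | _ n IH =>
  intro p q hpq hcard
  rcases hdeg q with h1 | h3
  · exact ⟨q, h1, Reachable.refl q⟩
  · obtain ⟨y₁, y₂, h12, h1p, h2p, hset⟩ := neighbor_three h3 hpq.symm
    have hqy : G.Adj q y₁ := by
      have : y₁ ∈ G.neighborSet q := by rw [hset]; simp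
      exact this
    have hbr : ¬ (G.deleteEdges {s(q,y₁)}).Reachable q y₁ := bridge_not_reach hG.IsAcyclic hqy
    have hzy : ¬ (G.deleteEdges {s(q,y₁)}).Reachable y₁ q := fun hh => hbr hh.symm
    have hqy1 : (G.deleteEdges {s(p,q)}).Adj q y₁ := by
      refine del_adj hqy fun hh => ?_
      rcases Sym2.eq_iff.mp hh with ⟨rfl, -⟩ | ⟨-, rfl⟩
      · exact G.loopless.irrefl _ hpq
      · exact h1p rfl
    have hsub : {z | (G.deleteEdges {s(q,y₁)}).Reachable y₁ z}
        ⊆ {z | (G.deleteEdges {s(p,q)}).Reachable q z} := by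
      intro z hz
      have hr1 : (G.deleteEdges {s(q,p)}).Reachable y₁ z := reach_avoid hz hzy
      rw [Sym2.eq_swap] at hr1
      exact hqy1.reachable.trans hr1
    have hss : {z | (G.deleteEdges {s(q,y₁)}).Reachable y₁ z}
        ⊂ {z | (G.deleteEdges {s(p,q)}).Reachable q z} := by
      refine ⟨hsub, fun hsup => hzy ?_⟩
      have : q ∈ {z | (G.deleteEdges {s(p,q)}).Reachable q z} := Reachable.refl q
      exact hsup this
    have hlt : {z | (G.deleteEdges {s(q,y₁)}).Reachable y₁ z}.ncard < n := by
      rw [← hcard]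
      exact Set.ncard_lt_ncard hss (Set.toFinite _)
    obtain ⟨z, hz1, hz2⟩ := IH _ hlt q y₁ hqy rfl
    exact ⟨z, hz1, hsub hz2⟩

private lemma descent [Finite V] (hG : G.IsTree)
    (hdeg : ∀ x : V, (G.neighborSet x).ncard = 1 ∨ (G.neighborSet x).ncard = 3)
    (r : V) (a : ℝ) (ha1 : 1 < a) :
    ∀ (m : ℕ) (u v : V), G.Adj u v → ¬ (G.deleteEdges {s(u,v)}).Reachable r v →
      {z | (G.neighborSet z).ncard = 1 ∧ ¬ (G.deleteEdges {s(u,v)}).Reachable r z}.ncard = m →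
      a ≤ (m : ℝ) →
      ∃ e ∈ G.edgeSet,
        a / 2 ≤ ({z | (G.neighborSet z).ncard = 1 ∧
            ¬ (G.deleteEdges {e}).Reachable r z}.ncard : ℝ) ∧
        ({z | (G.neighborSet z).ncard = 1 ∧
            ¬ (G.deleteEdges {e}).Reachable r z}.ncard : ℝ) < a := by
  intro m
  induction m using Nat.strong_induction_on with
  | _ m IH =>
  intro u v huv hfar hcard ham
  set F : Sym2 V → Set V := fun e =>
    {z | (G.neighborSet z).ncard = 1 ∧ ¬ (G.deleteEdges {e}).Reachable r z} with hF
  have hm2 : 2 ≤ m := by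
    rcases Nat.lt_or_ge m 2 with hlt | hge
    · exfalso
      have : (m : ℝ) ≤ 1 := by exact_mod_cast Nat.lt_succ_iff.mp hlt
      linarith
    · exact hge
  -- v is not a leaf
  have hv3 : (G.neighborSet v).ncard = 3 := by
    rcases hdeg v with h1 | h3
    · exfalso
      obtain ⟨u', hu'⟩ := Set.ncard_eq_one.mp h1
      have huu : u' = u := by
        have hm : u ∈ G.neighborSet v := huv.symm
        rw [hu', Set.mem_singleton_iff] at hm
        exact hm.symm
      rw [huu] at hu'
      have hsub : F s(u,v) ⊆ {v} := by
        intro z hz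
        have := (far_char hG huv hfar z).mp hz.2
        exact Set.mem_singleton_iff.mpr (leaf_reach_eq hu' this)
      have hle1 := Set.ncard_le_ncard hsub (Set.finite_singleton v)
      have h2 : (F s(u,v)).ncard = m := hcard
      rw [Set.ncard_singleton] at hle1
      omega
    · exact h3
  obtain ⟨y₁, y₂, h12, h1u, h2u, hset⟩ := neighbor_three hv3 huv.symm
  have hadjy : ∀ w : V, w ∈ G.neighborSet v → G.Adj v w := fun w hw => hw
  have hy₁ : G.Adj v y₁ := by refine hadjy _ ?_; rw [hset]; simp
  have hy₂ : G.Adj v y₂ := by refine hadjy _ ?_; rw [hset]; simp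
  -- generic facts for w ∈ {y₁, y₂}
  have hRrv : ∀ w : V, G.Adj v w → w ≠ u →
      (G.deleteEdges {s(v,w)}).Reachable r v := by
    intro w hw hwu
    have hru := reach_r_u hG huv hfar
    have h1 : (G.deleteEdges {s(v,w)}).Reachable r u := reach_avoid hru hfar
    refine h1.trans (del_adj huv fun hh => ?_).reachable
    rcases Sym2.eq_iff.mp hh with ⟨h', -⟩ | ⟨h', -⟩
    · exact G.loopless.irrefl _ (h' ▸ huv)
    · exact hwu h'.symm
  have hfarw : ∀ w : V, G.Adj v w → w ≠ u →
      ¬ (G.deleteEdges {s(v,w)}).Reachable r w := by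
    intro w hw hwu hrw
    exact bridge_not_reach hG.IsAcyclic hw ((hRrv w hw hwu).symm.trans hrw)
  have hsubF : ∀ w : V, G.Adj v w → w ≠ u → F s(v,w) ⊆ F s(u,v) := by
    intro w hw hwu z hz
    refine ⟨hz.1, fun hrz => hz.2 (reach_avoid hrz hfar)⟩
  have hdisj : ∀ w w' : V, G.Adj v w → G.Adj v w' → w ≠ u → w' ≠ u → w ≠ w' →
      ∀ z, z ∈ F s(v,w) → z ∈ F s(v,w') → False := by
    intro w w' hw hw' hwu hw'u hww' z hz hz'
    have h2z : (G.deleteEdges {s(v,w')}).Reachable w' z :=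
      (far_char hG hw' (hfarw w' hw' hw'u) z).mp hz'.2
    have hny : ¬ (G.deleteEdges {s(v,w')}).Reachable w' v := fun hh =>
      hfarw w' hw' hw'u ((hRrv w' hw' hw'u).trans hh.symm)
    have h3 : (G.deleteEdges {s(v,w)}).Reachable w' z := reach_avoid h2z hny
    have hr2 : (G.deleteEdges {s(v,w)}).Reachable r w' := by
      refine (hRrv w hw hwu).trans (del_adj hw' fun hh => ?_).reachable
      rcases Sym2.eq_iff.mp hh with ⟨-, h'⟩ | ⟨h', -⟩
      · exact hww' h'.symm
      · exact G.loopless.irrefl _ (h' ▸ hw)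
    exact hz.2 (hr2.trans h3)
  have hcover : F s(u,v) ⊆ F s(v,y₁) ∪ F s(v,y₂) := by
    intro z hz
    have hzv : z ≠ v := by
      rintro rfl
      have h1 := hz.1
      rw [hv3] at h1
      omega
    have hvz : (G.deleteEdges {s(u,v)}).Reachable v z := (far_char hG huv hfar z).mp hz.2
    obtain ⟨x, hxadj, hxr⟩ := step_off hvz (Ne.symm hzv)
    rw [SimpleGraph.deleteEdges_adj] at hxadj
    have hxu : x ≠ u := by
      rintro rfl
      exact hxadj.2 (Set.mem_singleton_iff.mpr Sym2.eq_swap)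
    have hxmem : x ∈ G.neighborSet v := hxadj.1
    rw [hset] at hxmem
    simp only [Set.mem_insert_iff, Set.mem_singleton_iff] at hxmem
    rcases hxmem with rfl | rfl | rfl
    · exact absurd rfl hxu
    · exact Or.inl ⟨hz.1, fun h => hfarw x hxadj.1 hxu (h.trans hxr.symm)⟩
    · exact Or.inr ⟨hz.1, fun h => hfarw x hxadj.1 hxu (h.trans hxr.symm)⟩
  have hnonemp : ∀ w : V, G.Adj v w → w ≠ u → (F s(v,w)).Nonempty := by
    intro w hw hwu
    obtain ⟨z, hz1, hz2⟩ := exists_far_leaf hG hdeg _ v w hw rfl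
    exact ⟨z, hz1, fun h => hfarw w hw hwu (h.trans hz2.symm)⟩
  -- the finishing step for the bigger side
  have finish : ∀ w w' : V, G.Adj v w → G.Adj v w' → w ≠ u → w' ≠ u → w ≠ w' →
      F s(u,v) ⊆ F s(v,w) ∪ F s(v,w') →
      (F s(v,w')).ncard ≤ (F s(v,w)).ncard →
      ∃ e ∈ G.edgeSet,
        a / 2 ≤ ((F e).ncard : ℝ) ∧ ((F e).ncard : ℝ) < a := by
    intro w w' hw hw' hwu hw'u hww' hcov hle
    have hmle : m ≤ (F s(v,w)).ncard + (F s(v,w')).ncard := by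
      rw [← hcard]
      exact le_trans (Set.ncard_le_ncard hcov (Set.toFinite _)) (Set.ncard_union_le _ _)
    obtain ⟨z', hz'⟩ := hnonemp w' hw' hw'u
    have hz'F : z' ∈ F s(u,v) := hsubF w' hw' hw'u hz'
    have hWle : (F s(v,w)).ncard ≤ m - 1 := by
      have hsub2 : F s(v,w) ⊆ F s(u,v) \ {z'} := by
        intro z hz
        refine ⟨hsubF w hw hwu hz, fun hzz => ?_⟩
        rw [Set.mem_singleton_iff] at hzz
        exact hdisj w w' hw hw' hwu hw'u hww' z hz (hzz ▸ hz')
      have := Set.ncard_le_ncard hsub2 (Set.toFinite _)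
      rwa [Set.ncard_diff_singleton_of_mem hz'F, hcard] at this
    have hWlt : (F s(v,w)).ncard < m := by omega
    have h2W : m ≤ 2 * (F s(v,w)).ncard := by omega
    by_cases hwa : ((F s(v,w)).ncard : ℝ) < a
    · refine ⟨s(v,w), (G.mem_edgeSet).mpr hw, ?_, hwa⟩
      have : (m : ℝ) ≤ 2 * ((F s(v,w)).ncard : ℝ) := by exact_mod_cast h2W
      linarith
    · push_neg at hwa
      exact IH _ hWlt v w hw (hfarw w hw hwu) rfl hwa
  rcases le_total ((F s(v,y₂)).ncard) ((F s(v,y₁)).ncard) with hle | hle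
  · exact finish y₁ y₂ hy₁ hy₂ h1u h2u h12 hcover hle
  · refine finish y₂ y₁ hy₂ hy₁ h2u h1u h12.symm (fun z hz => ?_) hle
    rcases hcover hz with h | h
    · exact Or.inr h
    · exact Or.inl h

end Aux

/-- if `T` is a binary tree with exactly `n+1` leaves (`n ≥ 1`),
`r` is a leaf of `T`, and `1 < a ≤ 2n` is real, then `T` has an edge `e` such
that the number of leaves in the component of `T - e` not containing `r` is in
`[a/2, a)`. -/
theorem exists_cut_edge {n : ℕ} (hn : 1 ≤ n) {V : Type} (T : BinTree V)
    (hleaves : {v : V | T.IsLeaf v}.ncard = n + 1)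
    (r : V) (hr : T.IsLeaf r) (a : ℝ) (ha1 : 1 < a) (ha2 : a ≤ 2 * (n : ℝ)) :
    ∃ e ∈ T.graph.edgeSet,
      a / 2 ≤ ({v : V | T.IsLeaf v ∧ ¬ (T.graph.deleteEdges {e}).Reachable r v}.ncard : ℝ) ∧
      ({v : V | T.IsLeaf v ∧ ¬ (T.graph.deleteEdges {e}).Reachable r v}.ncard : ℝ) < a := by
  have hfin : Finite V := T.finiteV
  obtain ⟨u0, hu0⟩ := Set.ncard_eq_one.mp hr
  have hadj : T.graph.Adj r u0 := by
    have h : u0 ∈ T.graph.neighborSet r := by rw [hu0]; exact rfl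
    exact h
  have hfar0 : ¬ (T.graph.deleteEdges {s(r,u0)}).Reachable r u0 :=
    bridge_not_reach T.isTree.IsAcyclic hadj
  have hcount : {z | (T.graph.neighborSet z).ncard = 1 ∧
      ¬ (T.graph.deleteEdges {s(r,u0)}).Reachable r z}.ncard = n := by
    have hEq : {z | (T.graph.neighborSet z).ncard = 1 ∧
        ¬ (T.graph.deleteEdges {s(r,u0)}).Reachable r z}
        = {v : V | T.IsLeaf v} \ {r} := by
      ext z
      constructor
      · rintro ⟨h1, h2⟩
        refine ⟨h1, fun hzr => h2 ?_⟩
        rw [Set.mem_singleton_iff] at hzr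
        subst hzr
        exact Reachable.refl z
      · rintro ⟨h1, h2⟩
        refine ⟨h1, fun hrz => h2 ?_⟩
        rw [Set.mem_singleton_iff]
        have hrz' : (T.graph.deleteEdges {s(u0,r)}).Reachable r z := by
          rwa [Sym2.eq_swap]
        exact leaf_reach_eq hu0 hrz'
    rw [hEq, Set.ncard_diff_singleton_of_mem (show r ∈ {v : V | T.IsLeaf v} from hr), hleaves]
    omega
  have hc2 : {v : V | T.IsLeaf v ∧
      ¬ (T.graph.deleteEdges {s(r,u0)}).Reachable r v}.ncard = n := hcount
  by_cases hna : (n : ℝ) < a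
  · refine ⟨s(r,u0), (T.graph.mem_edgeSet).mpr hadj, ?_, ?_⟩
    · rw [hc2]; linarith
    · rw [hc2]; exact hna
  · push_neg at hna
    exact descent T.isTree T.deg r a ha1 n r u0 hadj hfar0 hcount hna
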